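/- Let n ≥ 2. Suppose w_1, ..., w_n and v_1, ..., v_n are two ℤ-bases of ℤ^n satisfying v_1 = -w_1 and v_2 = -w_2, and suppose there exists a permutation π of {1,...,n} such that for every i, w_i - v_{π(i)} is an integer multiple of w_1. Then a contradiction follows (no such data exist). -/

import Mathlib

theorem stmt_6 (n : ℕ) (hn : 2 ≤ n)
    (w v : Module.Basis (Fin n) ℤ (Fin n → ℤ))
    (h1 : v ⟨0, by omega⟩ = -w ⟨0, by omega⟩)
    (h2 : v ⟨1, by omega⟩ = -w ⟨1, by omega⟩)
    (π : Equiv.Perm (Fin n))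
    (hmod : ∀ i : Fin n, ∃ a : ℤ, w i - v (π i) = a • w ⟨0, by omega⟩) :
    False := by
  set z0 : Fin n := ⟨0, by omega⟩ with hz0
  set z1 : Fin n := ⟨1, by omega⟩ with hz1
  have hne : z0 ≠ z1 := by simp [hz0, hz1, Fin.ext_iff]
  obtain ⟨b, hb⟩ := hmod (π.symm z0)
  rw [Equiv.apply_symm_apply, h1] at hb
  have hk : π.symm z0 = z0 := by
    by_contra h
    have := congrArg (fun x => (w.repr x) (π.symm z0)) hb
    simp only [map_sub, map_neg, map_smul, Module.Basis.repr_self, Finsupp.sub_apply,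
      Finsupp.coe_neg, Pi.neg_apply, Finsupp.smul_apply, Finsupp.single_apply] at this
    simp [h, Ne.symm h] at this
  have hπ0 : π z0 = z0 := by
    conv_lhs => rw [← hk]
    exact π.apply_symm_apply z0
  obtain ⟨a, ha⟩ := hmod (π.symm z1)
  rw [Equiv.apply_symm_apply, h2] at ha
  by_cases hj : π.symm z1 = z1
  · rw [hj] at ha
    have := congrArg (fun x => (w.repr x) z1) ha
    simp only [map_sub, map_neg, map_smul, Module.Basis.repr_self, Finsupp.sub_apply,
      Finsupp.coe_neg, Pi.neg_apply, Finsupp.smul_apply, Finsupp.single_apply] at this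
    simp [hne, Ne.symm hne] at this
  · have hj0 : π.symm z1 ≠ z0 := by
      intro h
      apply hne
      rw [← hπ0, ← h, π.apply_symm_apply]
    have := congrArg (fun x => (w.repr x) (π.symm z1)) ha
    simp only [map_sub, map_neg, map_smul, Module.Basis.repr_self, Finsupp.sub_apply,
      Finsupp.coe_neg, Pi.neg_apply, Finsupp.smul_apply, Finsupp.single_apply] at this
    simp [hj, Ne.symm hj, hj0, Ne.symm hj0] at this
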